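/- arXiv:2205.14846 — 3 statements merged into one kernel-verified Lean document; each statement's English description precedes it below -/
import Mathlib

section
/- Let g_I(x) = C_{d,r} ∏_{i∈I} x_i with I ⊆ {1,...,d}, |I| = r, normalized so that ∫ g_I² dσ = 1. If I and J are disjoint subsets of {1,...,d} each of cardinality r, then |∫_{S^{d-1}} g_I(x)² g_J(x)² dσ(x) − 1| ≤ C_r / d for a constant C_r depending only on r. -/
open MeasureTheory Metric

/-- The normalized (probability) uniform measure on the unit sphere `S^{d-1} ⊆ ℝ^d`. -/
noncomputable def uniformSphere (d : ℕ) :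
    Measure (sphere (0 : EuclideanSpace ℝ (Fin d)) 1) :=
  ((volume : Measure (EuclideanSpace ℝ (Fin d))).toSphere Set.univ)⁻¹ •
    (volume : Measure (EuclideanSpace ℝ (Fin d))).toSphere

/-- The normalized monomial `g_I(x) = C_{d,r} ∏_{i∈I} x_i`, where the constant `C_{d,r}`
is chosen so that `∫ g_I² dσ = 1`. -/
noncomputable def normMonomial (d : ℕ) (I : Finset (Fin d))
    (x : sphere (0 : EuclideanSpace ℝ (Fin d)) 1) : ℝ :=
  (∫ y : sphere (0 : EuclideanSpace ℝ (Fin d)) 1,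
      ∏ i ∈ I, ((y : EuclideanSpace ℝ (Fin d)) i) ^ 2 ∂(uniformSphere d)) ^ (-(1 / 2 : ℝ)) *
    ∏ i ∈ I, (x : EuclideanSpace ℝ (Fin d)) i

section AuxLemmas

open Real Set

/-- `∫_0^∞ x^n e^{-x²} dx`. -/
noncomputable def Gn (n : ℕ) : ℝ := ∫ x in Ioi (0:ℝ), x ^ n * Real.exp (-x ^ 2)

/-- `∫_ℝ x^k e^{-x²} dx`. -/
noncomputable def Bk (k : ℕ) : ℝ := ∫ x : ℝ, x ^ k * Real.exp (-x ^ 2)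

lemma Gn_eq (n : ℕ) : Gn n = (1/2) * Real.Gamma (((n:ℝ) + 1)/2) := by
  have h := integral_rpow_mul_exp_neg_rpow (p := 2) (q := (n:ℝ)) two_pos
    (lt_of_lt_of_le neg_one_lt_zero (Nat.cast_nonneg n))
  rw [Gn, ← h]
  refine setIntegral_congr_fun measurableSet_Ioi fun x hx => ?_
  rw [Real.rpow_natCast, show ((2:ℝ)) = ((2:ℕ):ℝ) by norm_num, Real.rpow_natCast]

lemma Gn_pos (n : ℕ) : 0 < Gn n := by
  rw [Gn_eq]
  have := Real.Gamma_pos_of_pos (s := ((n:ℝ)+1)/2) (by positivity)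
  linarith

lemma Bk_integrable (k : ℕ) : Integrable fun x : ℝ => x ^ k * Real.exp (-x ^ 2) := by
  have h := integrable_rpow_mul_exp_neg_mul_sq (b := 1) one_pos (s := (k:ℝ))
    (lt_of_lt_of_le neg_one_lt_zero (Nat.cast_nonneg k))
  refine h.congr (Filter.Eventually.of_forall fun x => ?_)
  simp only []; rw [Real.rpow_natCast]; ring_nf

lemma Bk_pos {k : ℕ} (hk : Even k) : 0 < Bk k := by
  have hnn : ∀ x : ℝ, 0 ≤ x ^ k * Real.exp (-x ^ 2) := fun x =>
    mul_nonneg (hk.pow_nonneg x) (Real.exp_pos _).le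
  have h1 : Gn k ≤ Bk k := by
    rw [Gn, Bk]
    exact setIntegral_le_integral (Bk_integrable k) (Filter.Eventually.of_forall hnn)
  exact lt_of_lt_of_le (Gn_pos k) h1

lemma Gamma_prod (x : ℝ) (hx : 0 < x) (m : ℕ) :
    Real.Gamma (x + m) = Real.Gamma x * ∏ k ∈ Finset.range m, (x + k) := by
  induction m with
  | zero => simp
  | succ m ih =>
    have h : x + ((m+1:ℕ):ℝ) = (x + m) + 1 := by push_cast; ring
    rw [h, Real.Gamma_add_one (by positivity), ih, Finset.prod_range_succ]; ring

lemma gaussian_eq_prod (d : ℕ) (S : Finset (Fin d)) :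
    ∫ x : EuclideanSpace ℝ (Fin d), (∏ i ∈ S, x i ^ 2) * Real.exp (-‖x‖ ^ 2)
      = Bk 2 ^ S.card * Bk 0 ^ (d - S.card) := by
  have hMP := (EuclideanSpace.volume_preserving_symm_measurableEquiv_toLp (Fin d)).symm
  rw [← hMP.integral_comp (MeasurableEquiv.measurableEmbedding _)]
  have hcoord : ∀ (y : Fin d → ℝ) (i : Fin d),
      ((MeasurableEquiv.toLp 2 (Fin d → ℝ)) y) i = y i := fun y i => rfl
  have hnorm : ∀ y : Fin d → ℝ,
      ‖(MeasurableEquiv.toLp 2 (Fin d → ℝ)) y‖ ^ 2 = ∑ i, y i ^ 2 := by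
    intro y
    rw [EuclideanSpace.norm_eq, Real.sq_sqrt (Finset.sum_nonneg fun i _ => by positivity)]
    simp [hcoord, sq_abs]
  have hint : ∀ y : Fin d → ℝ,
      (∏ i ∈ S, ((MeasurableEquiv.toLp 2 (Fin d → ℝ)) y) i ^ 2)
        * Real.exp (-‖(MeasurableEquiv.toLp 2 (Fin d → ℝ)) y‖ ^ 2)
      = ∏ i, (y i ^ (if i ∈ S then 2 else 0) * Real.exp (-(y i) ^ 2)) := by
    intro y
    simp only [hcoord, hnorm]
    rw [Finset.prod_mul_distrib, ← Real.exp_sum]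
    congr 1
    · symm
      rw [← Finset.prod_subset (Finset.subset_univ S)
        (fun x _ hx => by rw [if_neg hx, pow_zero])]
      exact Finset.prod_congr rfl fun i hi => by rw [if_pos hi]
    · congr 1; rw [← Finset.sum_neg_distrib]
  calc ∫ y : Fin d → ℝ, (fun x : EuclideanSpace ℝ (Fin d) =>
          (∏ i ∈ S, x i ^ 2) * Real.exp (-‖x‖ ^ 2))
          ((MeasurableEquiv.toLp 2 (Fin d → ℝ)) y)
      = ∫ y : Fin d → ℝ, ∏ i, (y i ^ (if i ∈ S then 2 else 0) * Real.exp (-(y i) ^ 2)) := by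
        exact integral_congr_ae (Filter.Eventually.of_forall hint)
    _ = ∏ i : Fin d, Bk (if i ∈ S then 2 else 0) := by
        rw [volume_pi, integral_fintype_prod_eq_prod (f := fun (i : Fin d) (t : ℝ) =>
          t ^ (if i ∈ S then 2 else 0) * Real.exp (-t ^ 2))]
        rfl
    _ = Bk 2 ^ S.card * Bk 0 ^ (d - S.card) := by
        rw [show (fun i : Fin d => Bk (if i ∈ S then 2 else 0))
            = fun i : Fin d => (if i ∈ S then Bk 2 else Bk 0) from funext fun i => by split <;> rfl]
        rw [Finset.prod_ite, Finset.prod_const, Finset.prod_const]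
        congr 1
        · congr 1; rw [Finset.filter_mem_eq_inter, Finset.univ_inter]
        · congr 1
          rw [show Finset.filter (fun x => x ∉ S) Finset.univ = Sᶜ by ext i; simp,
            Finset.card_compl, Fintype.card_fin]

lemma integral_volumeIoiPow (n : ℕ) (g : ℝ → ℝ) :
    ∫ x : Ioi (0:ℝ), g x ∂(Measure.volumeIoiPow n) = ∫ x in Ioi (0:ℝ), x ^ n * g x := by
  simp only [Measure.volumeIoiPow, ENNReal.ofReal]
  rw [integral_withDensity_eq_integral_smul
      ((measurable_subtype_coe.pow_const _).real_toNNReal),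
    integral_subtype_comap measurableSet_Ioi (fun a : ℝ => Real.toNNReal (a ^ n) • g a),
    setIntegral_congr_fun measurableSet_Ioi (fun x hx => ?_)]
  rw [NNReal.smul_def, Real.coe_toNNReal _ (pow_nonneg (le_of_lt hx) _), smul_eq_mul]

lemma gaussian_eq_sphere (d : ℕ) (hd : 0 < d) (S : Finset (Fin d)) :
    ∫ x : EuclideanSpace ℝ (Fin d), (∏ i ∈ S, x i ^ 2) * Real.exp (-‖x‖ ^ 2)
      = (∫ y : sphere (0 : EuclideanSpace ℝ (Fin d)) 1,
           ∏ i ∈ S, ((y : EuclideanSpace ℝ (Fin d)) i) ^ 2 ∂((volume).toSphere))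
        * Gn (d - 1 + 2 * S.card) := by
  haveI : Nonempty (Fin d) := ⟨⟨0, hd⟩⟩
  haveI : Nontrivial (EuclideanSpace ℝ (Fin d)) :=
    inferInstanceAs (Nontrivial (PiLp 2 fun _ : Fin d => ℝ))
  set E := EuclideanSpace ℝ (Fin d)
  set F : E → ℝ := fun x => (∏ i ∈ S, x i ^ 2) * Real.exp (-‖x‖ ^ 2) with hF
  have hdim : Module.finrank ℝ E = d := finrank_euclideanSpace_fin
  calc ∫ x : E, F x
      = ∫ x : ({0}ᶜ : Set E), F x ∂((volume : Measure E).comap Subtype.val) := by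
        rw [integral_subtype_comap (measurableSet_singleton (0:E)).compl F,
          restrict_compl_singleton]
    _ = ∫ z : sphere (0:E) 1 × Ioi (0:ℝ), F (((homeomorphUnitSphereProd E).symm z : ({0}ᶜ : Set E)) : E)
          ∂((volume : Measure E).toSphere.prod (Measure.volumeIoiPow (Module.finrank ℝ E - 1))) := by
        rw [← (Measure.measurePreserving_homeomorphUnitSphereProd
          (volume : Measure E)).integral_comp (Homeomorph.measurableEmbedding _)
          (fun z => F (((homeomorphUnitSphereProd E).symm z : ({0}ᶜ : Set E)) : E))]
        exact integral_congr_ae (Filter.Eventually.of_forall fun x => by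
          simp only [Homeomorph.symm_apply_apply])
    _ = ∫ z : sphere (0:E) 1 × Ioi (0:ℝ),
          (∏ i ∈ S, ((z.1 : E) i) ^ 2) * ((z.2 : ℝ) ^ (2 * S.card) * Real.exp (-(z.2:ℝ) ^ 2))
          ∂((volume : Measure E).toSphere.prod (Measure.volumeIoiPow (Module.finrank ℝ E - 1))) := by
        refine integral_congr_ae (Filter.Eventually.of_forall fun z => ?_)
        obtain ⟨y, ρ⟩ := z
        have hcoe : (((homeomorphUnitSphereProd E).symm (y, ρ) : ({0}ᶜ : Set E)) : E)
            = (ρ : ℝ) • (y : E) := rfl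
        have hco : ∀ i, ((ρ:ℝ) • (y:E)) i = (ρ:ℝ) * (y:E) i := fun i => rfl
        have hny : ‖(y:E)‖ = 1 := mem_sphere_zero_iff_norm.mp y.2
        have hnρ : ‖(ρ:ℝ) • (y:E)‖ = (ρ:ℝ) := by
          rw [norm_smul, hny, mul_one, Real.norm_eq_abs, abs_of_pos ρ.2]
        simp only [hF, hcoe, hco, hnρ]
        have hprod : ∏ x ∈ S, ((ρ:ℝ) * (y:E) x) ^ 2
            = (ρ:ℝ) ^ (2 * S.card) * ∏ x ∈ S, ((y:E) x) ^ 2 := by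
          calc ∏ x ∈ S, ((ρ:ℝ) * (y:E) x) ^ 2
              = ∏ x ∈ S, ((ρ:ℝ) ^ 2 * ((y:E) x) ^ 2) :=
                Finset.prod_congr rfl fun i _ => by ring
            _ = _ := by
                rw [Finset.prod_mul_distrib, Finset.prod_const, ← pow_mul]
        rw [hprod]; ring
    _ = (∫ y : sphere (0:E) 1, ∏ i ∈ S, ((y : E) i) ^ 2 ∂((volume : Measure E).toSphere))
        * ∫ ρ : Ioi (0:ℝ), ((ρ:ℝ) ^ (2 * S.card) * Real.exp (-(ρ:ℝ) ^ 2))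
            ∂(Measure.volumeIoiPow (Module.finrank ℝ E - 1)) := by
        exact integral_prod_mul (f := fun y : sphere (0:E) 1 => ∏ i ∈ S, ((y:E) i) ^ 2)
          (g := fun t : Ioi (0:ℝ) => (t:ℝ) ^ (2 * S.card) * Real.exp (-(t:ℝ) ^ 2))
    _ = _ := by
        rw [integral_volumeIoiPow (Module.finrank ℝ E - 1)
          (fun t : ℝ => t ^ (2 * S.card) * Real.exp (-t ^ 2)), hdim]
        congr 1
        rw [Gn]
        refine setIntegral_congr_fun measurableSet_Ioi fun x hx => ?_
        rw [← mul_assoc, ← pow_add]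

lemma toSphere_univ_toReal (d : ℕ) (hd : 0 < d) :
    ((volume : Measure (EuclideanSpace ℝ (Fin d))).toSphere Set.univ).toReal
      = Bk 0 ^ d / Gn (d - 1) := by
  have h := (gaussian_eq_sphere d hd ∅).symm.trans (gaussian_eq_prod d ∅)
  simp only [Finset.prod_empty, integral_const, smul_eq_mul, mul_one, pow_zero, one_mul,
    Finset.card_empty, Nat.sub_zero, mul_zero, add_zero] at h
  rw [eq_div_iff (ne_of_gt (Gn_pos (d-1)))]
  exact h

lemma moment_formula (d : ℕ) (hd : 0 < d) (S : Finset (Fin d)) :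
    ∫ y : sphere (0 : EuclideanSpace ℝ (Fin d)) 1,
        ∏ i ∈ S, ((y : EuclideanSpace ℝ (Fin d)) i) ^ 2 ∂(uniformSphere d)
      = Bk 2 ^ S.card * Bk 0 ^ (d - S.card) / Gn (d - 1 + 2 * S.card)
          * (Gn (d - 1) / Bk 0 ^ d) := by
  have hA : (∫ y : sphere (0 : EuclideanSpace ℝ (Fin d)) 1,
        ∏ i ∈ S, ((y : EuclideanSpace ℝ (Fin d)) i) ^ 2 ∂((volume).toSphere))
      = Bk 2 ^ S.card * Bk 0 ^ (d - S.card) / Gn (d - 1 + 2 * S.card) := by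
    rw [eq_div_iff (ne_of_gt (Gn_pos _))]
    exact (gaussian_eq_sphere d hd S).symm.trans (gaussian_eq_prod d S)
  rw [uniformSphere, integral_smul_measure, ENNReal.toReal_inv, toSphere_univ_toReal d hd, hA,
    smul_eq_mul]
  have hb := Bk_pos (k := 0) Even.zero
  have hg := Gn_pos (d - 1)
  rw [inv_div]
  ring

lemma moment_pos (d : ℕ) (hd : 0 < d) (S : Finset (Fin d)) :
    0 < ∫ y : sphere (0 : EuclideanSpace ℝ (Fin d)) 1,
        ∏ i ∈ S, ((y : EuclideanSpace ℝ (Fin d)) i) ^ 2 ∂(uniformSphere d) := by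
  rw [moment_formula d hd S]
  have hb := Bk_pos (k := 0) Even.zero
  have hc := Bk_pos (k := 2) (by decide)
  have hg1 := Gn_pos (d - 1 + 2 * S.card)
  have hg0 := Gn_pos (d - 1)
  positivity

lemma Gn_shift (d m : ℕ) (hd : 0 < d) :
    Gn (d - 1 + 2 * m) = (1/2) * Real.Gamma ((d:ℝ)/2 + m) := by
  rw [Gn_eq]
  congr 1
  have h1 : ((d - 1 + 2*m : ℕ) : ℝ) = (d:ℝ) - 1 + 2*m := by
    push_cast [Nat.cast_sub hd]
    ring
  rw [h1]; ring

lemma ratio_eq (d r : ℕ) (hd : 0 < d) (h2r : 2 * r ≤ d) :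
    (Bk 2 ^ (2*r) * Bk 0 ^ (d - 2*r) / Gn (d - 1 + 2 * (2*r)) * (Gn (d-1) / Bk 0 ^ d))
      / (Bk 2 ^ r * Bk 0 ^ (d - r) / Gn (d - 1 + 2 * r) * (Gn (d-1) / Bk 0 ^ d)) ^ 2
    = ∏ k ∈ Finset.range r, (((d:ℝ)/2 + k) / ((d:ℝ)/2 + k + r)) := by
  have hb := Bk_pos (k := 0) Even.zero
  have hc := Bk_pos (k := 2) (by decide)
  have hg0 := Gn_pos (d - 1)
  have hg1 := Gn_pos (d - 1 + 2 * r)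
  have hg2 := Gn_pos (d - 1 + 2 * (2*r))
  have step1 : (Bk 2 ^ (2*r) * Bk 0 ^ (d - 2*r) / Gn (d - 1 + 2 * (2*r)) * (Gn (d-1) / Bk 0 ^ d))
      / (Bk 2 ^ r * Bk 0 ^ (d - r) / Gn (d - 1 + 2 * r) * (Gn (d-1) / Bk 0 ^ d)) ^ 2
      = Gn (d - 1 + 2*r) ^ 2 / (Gn (d-1) * Gn (d - 1 + 2*(2*r))) := by
    rw [show d - r = (d - 2*r) + r by omega, show Bk 0 ^ d = Bk 0 ^ (d - 2*r) * Bk 0 ^ (2*r) by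
      rw [← pow_add]; congr 1; omega]
    rw [pow_add]
    have hb0 : Bk 0 ^ (d - 2*r) ≠ 0 := by positivity
    have hb1 : Bk 0 ^ (2*r) ≠ 0 := by positivity
    have hb2 : Bk 0 ^ r ≠ 0 := by positivity
    have hc1 : Bk 2 ^ r ≠ 0 := by positivity
    field_simp
    ring
  rw [step1]
  have hx : (0:ℝ) < (d:ℝ)/2 := by positivity
  have hGam := Real.Gamma_pos_of_pos hx
  rw [Gn_shift d r hd, Gn_shift d (2*r) hd,
    show Gn (d-1) = Gn (d - 1 + 2*0) by norm_num, Gn_shift d 0 hd]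
  rw [Gamma_prod _ hx r, Gamma_prod _ hx (2*r), Gamma_prod _ hx 0]
  rw [show 2*r = r + r from two_mul r, Finset.prod_range_add]
  have hpos : ∀ k ∈ Finset.range r, (0:ℝ) < (d:ℝ)/2 + k := fun k _ => by positivity
  have hprodpos : (0:ℝ) < ∏ k ∈ Finset.range r, ((d:ℝ)/2 + k) :=
    Finset.prod_pos hpos
  have hprodpos2 : (0:ℝ) < ∏ k ∈ Finset.range r, ((d:ℝ)/2 + ((r + k : ℕ) : ℝ)) :=
    Finset.prod_pos fun k _ => by positivity
  have hcongr : ∏ k ∈ Finset.range r, (((d:ℝ)/2 + k) / ((d:ℝ)/2 + k + r))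
      = (∏ k ∈ Finset.range r, ((d:ℝ)/2 + k))
          / ∏ k ∈ Finset.range r, ((d:ℝ)/2 + ((r + k : ℕ):ℝ)) := by
    rw [← Finset.prod_div_distrib]
    exact Finset.prod_congr rfl fun k _ => by push_cast; ring_nf
  rw [hcongr, Finset.prod_range_zero]
  have hG : Real.Gamma ((d:ℝ)/2) ≠ 0 := ne_of_gt hGam
  field_simp

lemma prod_le_one_and (n : ℕ) (t : ℕ → ℝ) (ε : ℝ) (h0 : ∀ k, 0 ≤ t k) (h1 : ∀ k, t k ≤ 1)
    (h2 : ∀ k, 1 - t k ≤ ε) :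
    (∏ k ∈ Finset.range n, t k) ≤ 1 ∧ 1 - (∏ k ∈ Finset.range n, t k) ≤ n * ε := by
  induction n with
  | zero => simp
  | succ n ih =>
    have hP : 0 ≤ ∏ k ∈ Finset.range n, t k := Finset.prod_nonneg fun k _ => h0 k
    rw [Finset.prod_range_succ]
    push_cast
    constructor
    · nlinarith [ih.1, h0 n, h1 n]
    · nlinarith [ih.1, ih.2, h0 n, h1 n, h2 n]

lemma abs_prod_sub_one_le (d r : ℕ) (hd : 0 < d) :
    |(∏ k ∈ Finset.range r, (((d:ℝ)/2 + k) / ((d:ℝ)/2 + k + r))) - 1| ≤ 2 * r^2 / d := by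
  have hx : (0:ℝ) < (d:ℝ)/2 := by positivity
  set t : ℕ → ℝ := fun k => ((d:ℝ)/2 + k) / ((d:ℝ)/2 + k + r) with ht
  have h0 : ∀ k, 0 ≤ t k := fun k => by positivity
  have h1 : ∀ k, t k ≤ 1 := fun k => by
    rw [ht]
    exact div_le_one_of_le₀ (le_add_of_nonneg_right (Nat.cast_nonneg r)) (by positivity)
  have h2 : ∀ k, 1 - t k ≤ (r:ℝ) / ((d:ℝ)/2) := by
    intro k
    have hb : (0:ℝ) < (d:ℝ)/2 + k + r := by positivity
    have he : 1 - t k = (r:ℝ) / ((d:ℝ)/2 + k + r) := by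
      rw [ht]; field_simp; ring
    rw [he]
    exact div_le_div_of_nonneg_left (Nat.cast_nonneg r) hx
      (by nlinarith [Nat.cast_nonneg (α := ℝ) k, Nat.cast_nonneg (α := ℝ) r])
  obtain ⟨hle, hsub⟩ := prod_le_one_and r t ((r:ℝ) / ((d:ℝ)/2)) h0 h1 h2
  have habs : |(∏ k ∈ Finset.range r, t k) - 1| = 1 - ∏ k ∈ Finset.range r, t k := by
    rw [abs_sub_comm, abs_of_nonneg (by linarith)]
  rw [habs]
  have heq : (r:ℝ) * ((r:ℝ) / ((d:ℝ)/2)) = 2 * r^2 / d := by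
    field_simp
  calc 1 - ∏ k ∈ Finset.range r, t k ≤ r * ((r:ℝ) / ((d:ℝ)/2)) := hsub
    _ = 2 * r^2 / d := heq

end AuxLemmas

/-- If `I, J ⊆ {1,...,d}` are disjoint sets of cardinality `r`, then
`|∫ g_I² g_J² dσ − 1| ≤ C_r / d` for a constant `C_r` depending only on `r`. -/
theorem normMonomial_sq_decorrelation (r : ℕ) :
    ∃ C : ℝ, ∀ d : ℕ, 0 < d → ∀ I J : Finset (Fin d), I.card = r → J.card = r → Disjoint I J →
      |(∫ x : sphere (0 : EuclideanSpace ℝ (Fin d)) 1,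
          (normMonomial d I x) ^ 2 * (normMonomial d J x) ^ 2 ∂(uniformSphere d)) - 1|
        ≤ C / d := by
  refine ⟨2 * r ^ 2, fun d hd I J hI hJ hIJ => ?_⟩
  set E := EuclideanSpace ℝ (Fin d)
  set σ := uniformSphere d
  set M : Finset (Fin d) → ℝ := fun S =>
    ∫ y : sphere (0 : E) 1, ∏ i ∈ S, ((y : E) i) ^ 2 ∂σ with hM
  have hcard : (I ∪ J).card = 2 * r := by
    rw [Finset.card_union_of_disjoint hIJ, hI, hJ]; ring
  have h2r : 2 * r ≤ d := by
    rw [← hcard]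
    calc (I ∪ J).card ≤ Finset.univ.card := Finset.card_le_univ _
      _ = d := by rw [Finset.card_univ, Fintype.card_fin]
  have hMI : 0 < M I := moment_pos d hd I
  have hMJ : 0 < M J := moment_pos d hd J
  have hrpow : ∀ S : Finset (Fin d), 0 < M S → ((M S) ^ (-(1/2 : ℝ))) ^ 2 = (M S)⁻¹ := by
    intro S hS
    rw [← Real.rpow_natCast ((M S) ^ (-(1/2 : ℝ))) 2, ← Real.rpow_mul hS.le]
    norm_num
    exact Real.rpow_neg_one _
  have hinteg : ∀ x : sphere (0 : E) 1,
      (normMonomial d I x) ^ 2 * (normMonomial d J x) ^ 2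
        = (M I)⁻¹ * (M J)⁻¹ * ∏ i ∈ I ∪ J, ((x : E) i) ^ 2 := by
    intro x
    rw [normMonomial, normMonomial, mul_pow, mul_pow, ← Finset.prod_pow, ← Finset.prod_pow,
      Finset.prod_union hIJ]
    rw [show (∫ y : sphere (0 : E) 1, ∏ i ∈ I, ((y : E) i) ^ 2 ∂(uniformSphere d)) = M I from rfl,
      show (∫ y : sphere (0 : E) 1, ∏ i ∈ J, ((y : E) i) ^ 2 ∂(uniformSphere d)) = M J from rfl,
      hrpow I hMI, hrpow J hMJ]
    ring
  have hval : (∫ x : sphere (0 : E) 1,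
      (normMonomial d I x) ^ 2 * (normMonomial d J x) ^ 2 ∂σ)
      = (M I)⁻¹ * (M J)⁻¹ * M (I ∪ J) := by
    rw [integral_congr_ae (Filter.Eventually.of_forall hinteg), integral_const_mul]
  have hMIJ : (M I)⁻¹ * (M J)⁻¹ * M (I ∪ J) = M (I ∪ J) / (M I) ^ 2 := by
    have hIJeq : M J = M I := by
      rw [hM]
      simp only []
      rw [moment_formula d hd I, moment_formula d hd J, hI, hJ]
    rw [hIJeq, eq_div_iff (pow_ne_zero 2 hMI.ne')]
    have h : (M I)⁻¹ * (M I)⁻¹ * M (I ∪ J) * M I ^ 2 = (M I * (M I)⁻¹) ^ 2 * M (I ∪ J) := by ring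
    rw [h, mul_inv_cancel₀ hMI.ne', one_pow, one_mul]
  have hform : M (I ∪ J) / (M I) ^ 2
      = ∏ k ∈ Finset.range r, (((d:ℝ)/2 + k) / ((d:ℝ)/2 + k + r)) := by
    rw [hM]
    simp only []
    rw [moment_formula d hd (I ∪ J), moment_formula d hd I, hcard, hI]
    exact ratio_eq d r hd h2r
  rw [hval, hMIJ, hform]
  exact abs_prod_sub_one_le d r hd
end

section
/- For b, c > 0, ∫_0^1 √(t(1-t)) / ((t+b)²(t+c)) dt = π / (2√(b²+b) · ((b + c + 2bc) + 2√((b+1)(c+1) b c))). -/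
open Real Set

lemma sqrt_mul_sqrt_eq {p q r : ℝ} (hp : 0 ≤ p) (hq : 0 ≤ q) (h : p * q = r) :
    Real.sqrt p * Real.sqrt q = Real.sqrt r := by
  rw [← Real.sqrt_mul hp, h]

lemma hasDerivAt_W {x : ℝ} (hx0 : 0 < x) (hx1 : x < 1) :
    HasDerivAt (fun y : ℝ => Real.sqrt (y * (1 - y))) ((1 - 2*x) / (2 * Real.sqrt (x*(1-x)))) x := by
  have h : HasDerivAt (fun y : ℝ => y * (1 - y)) (1 - 2*x) x := by
    have := (hasDerivAt_id x).mul ((hasDerivAt_const x (1:ℝ)).sub (hasDerivAt_id x))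
    convert this using 1; rfl; rfl; rfl; simp [id] <;> ring
  exact h.sqrt (by nlinarith)

lemma hasDerivAt_P {x : ℝ} (hx0 : 0 < x) (hx1 : x < 1) :
    HasDerivAt (fun y : ℝ => Real.arccos (1 - 2*y) / 2) (1 / (2 * Real.sqrt (x*(1-x)))) x := by
  have hin : HasDerivAt (fun y : ℝ => 1 - 2*y) (-2) x := by
    have := (hasDerivAt_const x (1:ℝ)).sub ((hasDerivAt_id x).const_mul 2)
    convert this using 1; rfl; rfl; rfl; simp [id]
  have harc := (Real.hasDerivAt_arccos (by nlinarith) (by nlinarith)).comp x hin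
  have := harc.div_const 2
  convert this using 1
  rfl
  rfl
  rfl
  have h4 : 1 - (1 - 2*x)^2 = 4 * (x*(1-x)) := by ring
  have hkey : Real.sqrt (4 * (x*(1-x))) = 2 * Real.sqrt (x*(1-x)) := by
    rw [show (4:ℝ) * (x*(1-x)) = (2:ℝ)^2 * (x*(1-x)) by norm_num, Real.sqrt_mul (by positivity),
      Real.sqrt_sq (by norm_num : (0:ℝ) ≤ 2)]
  rw [h4, hkey]
  have hs : (0:ℝ) < Real.sqrt (x*(1-x)) := Real.sqrt_pos.2 (by nlinarith)
  field_simp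

lemma hasDerivAt_Q {a x : ℝ} (ha : 0 < a) (hx0 : 0 < x) (hx1 : x < 1) :
    HasDerivAt (fun y : ℝ => Real.arcsin (Real.sqrt ((a+1)*y) / Real.sqrt (y+a)))
      (Real.sqrt (a*(a+1)) / (2 * (x+a) * Real.sqrt (x*(1-x)))) x := by
  have hxa : 0 < x + a := by linarith
  have hu : HasDerivAt (fun y : ℝ => Real.sqrt ((a+1)*y)) ((a+1) / (2 * Real.sqrt ((a+1)*x))) x := by
    have h : HasDerivAt (fun y : ℝ => (a+1)*y) (a+1) x := by
      simpa using (hasDerivAt_id x).const_mul (a+1)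
    exact h.sqrt (by positivity)
  have hv : HasDerivAt (fun y : ℝ => Real.sqrt (y+a)) (1 / (2 * Real.sqrt (x+a))) x := by
    have h : HasDerivAt (fun y : ℝ => y + a) 1 x := (hasDerivAt_id x).add_const a
    exact h.sqrt (by positivity)
  have hvpos : (0:ℝ) < Real.sqrt (x+a) := Real.sqrt_pos.2 hxa
  have hupos : (0:ℝ) < Real.sqrt ((a+1)*x) := Real.sqrt_pos.2 (by positivity)
  have hdiv := hu.div hv hvpos.ne'
  have hu2 : Real.sqrt ((a+1)*x) ^ 2 = (a+1)*x := Real.sq_sqrt (by positivity)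
  have hv2 : Real.sqrt (x+a) ^ 2 = x + a := Real.sq_sqrt hxa.le
  have hs2 : 1 - (Real.sqrt ((a+1)*x) / Real.sqrt (x+a))^2 = a*(1-x)/(x+a) := by
    rw [div_pow, hu2, hv2]; field_simp; ring
  have h1x : (0:ℝ) < 1 - x := by linarith
  have hslt : Real.sqrt ((a+1)*x) / Real.sqrt (x+a) < 1 := by
    nlinarith [hs2, div_pos (mul_pos ha h1x) hxa]
  have hsgt : (-1:ℝ) < Real.sqrt ((a+1)*x) / Real.sqrt (x+a) := by
    have : (0:ℝ) ≤ Real.sqrt ((a+1)*x) / Real.sqrt (x+a) := by positivity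
    linarith
  have harc := (Real.hasDerivAt_arcsin hsgt.ne' hslt.ne).comp x hdiv
  convert harc using 1
  rfl
  rfl
  rfl
  have hqpos : (0:ℝ) < Real.sqrt (a*(1-x)) := Real.sqrt_pos.2 (by positivity)
  have hsq : Real.sqrt (1 - (Real.sqrt ((a+1)*x) / Real.sqrt (x+a))^2)
      = Real.sqrt (a*(1-x)) / Real.sqrt (x+a) := by
    rw [hs2, Real.sqrt_div (by positivity)]
  rw [hsq]
  have hwpos : (0:ℝ) < Real.sqrt (x*(1-x)) := Real.sqrt_pos.2 (by positivity)
  have hmul : Real.sqrt (a*(a+1)) * Real.sqrt (x*(1-x))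
      = Real.sqrt ((a+1)*x) * Real.sqrt (a*(1-x)) := by
    rw [sqrt_mul_sqrt_eq (by positivity) (by positivity) rfl,
        sqrt_mul_sqrt_eq (by positivity) (by positivity) rfl]
    congr 1; ring
  have hsa2 : Real.sqrt (a*(a+1)) ^ 2 = a*(a+1) := Real.sq_sqrt (by positivity)
  have key : Real.sqrt (a*(a+1)) * (Real.sqrt ((a+1)*x) * Real.sqrt (a*(1-x)))
      = a*(a+1) * Real.sqrt (x*(1-x)) := by
    linear_combination (-Real.sqrt (a*(a+1))) * hmul + Real.sqrt (x*(1-x)) * hsa2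
  have h_a : Real.sqrt a ^ 2 = a := Real.sq_sqrt ha.le
  have h_A : Real.sqrt (a+1) ^ 2 = a+1 := Real.sq_sqrt (by linarith)
  have h_x : Real.sqrt x ^ 2 = x := Real.sq_sqrt hx0.le
  have h_xa : Real.sqrt (x+a) ^ 2 = x+a := Real.sq_sqrt hxa.le
  field_simp
  linear_combination (4*(x+a)*Real.sqrt x*Real.sqrt (1-x)*Real.sqrt (x+a)) *
      (Real.sqrt (a+1)^2 * h_a + (a+x) * h_A - (a+1) * h_xa + Real.sqrt (a+1)^2 * h_x)
      + Real.sqrt (x+a)^2 * key + (x+a) * Real.sqrt (x*(1-x)) * hu2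
      - 4 * Real.sqrt (x+a) * (Real.sqrt x * Real.sqrt (1-x)) * Real.sqrt (a+1)^2 * (x+a) * (h_a + h_x)
      - 4 * Real.sqrt (x+a) * (Real.sqrt x * Real.sqrt (1-x)) * (x+a)^2 * h_A
      + 4 * Real.sqrt (x+a) * (x+a) * (a+1) * (Real.sqrt x * Real.sqrt (1-x)) * h_xa
      - (a+1) * x * Real.sqrt (x*(1-x)) * h_xa

lemma contOn_QQ {a : ℝ} (ha : 0 < a) :
    ContinuousOn (fun x : ℝ => Real.arcsin (Real.sqrt ((a+1)*x)/Real.sqrt (x+a))) (Icc 0 1) := by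
  apply Real.continuous_arcsin.comp_continuousOn
  apply ContinuousOn.div
  · exact (Real.continuous_sqrt.comp (continuous_const.mul continuous_id)).continuousOn
  · exact (Real.continuous_sqrt.comp (continuous_id.add continuous_const)).continuousOn
  · intro x hx
    exact (Real.sqrt_pos.2 (by linarith [hx.1] : (0:ℝ) < x + a)).ne'

lemma cont_PP : Continuous (fun x : ℝ => Real.arccos (1-2*x)/2) :=
  (Real.continuous_arccos.comp (by continuity)).div_const 2

lemma cont_WW : Continuous (fun x : ℝ => Real.sqrt (x*(1-x))) :=
  Real.continuous_sqrt.comp (by continuity)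

lemma Q_zero {a : ℝ} (ha : 0 < a) :
    Real.arcsin (Real.sqrt ((a+1)*(0:ℝ))/Real.sqrt ((0:ℝ)+a)) = 0 := by
  norm_num

lemma Q_one {a : ℝ} (ha : 0 < a) :
    Real.arcsin (Real.sqrt ((a+1)*(1:ℝ))/Real.sqrt ((1:ℝ)+a)) = π/2 := by
  rw [mul_one, add_comm (1:ℝ) a, div_self (Real.sqrt_pos.2 (by linarith)).ne', Real.arcsin_one]

lemma integral_L1 (a : ℝ) (ha : 0 < a) :
    ∫ t in (0:ℝ)..1, Real.sqrt (t*(1-t))/(t+a) = π * (a + 1/2 - Real.sqrt (a^2+a)) := by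
  have h01 : (0:ℝ) ≤ 1 := by norm_num
  set F : ℝ → ℝ := fun x => -2*Real.sqrt (a*(a+1)) * Real.arcsin (Real.sqrt ((a+1)*x)/Real.sqrt (x+a))
      + (2*a+1) * (Real.arccos (1-2*x)/2) + Real.sqrt (x*(1-x)) with hF
  have hcF : ContinuousOn F (Icc 0 1) := by
    apply ContinuousOn.add
    apply ContinuousOn.add
    · exact (contOn_QQ ha).const_smul (-2*Real.sqrt (a*(a+1)))
    · exact (cont_PP.continuousOn).const_smul (2*a+1)
    · exact cont_WW.continuousOn
  have hderiv : ∀ x ∈ Ioo (0:ℝ) 1, HasDerivWithinAt F (Real.sqrt (x*(1-x))/(x+a)) (Ioi x) x := by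
    intro x hx
    obtain ⟨hx0, hx1⟩ := hx
    have hxa : (0:ℝ) < x + a := by linarith
    have H := (((hasDerivAt_Q ha hx0 hx1).const_mul (-2*Real.sqrt (a*(a+1)))).add
      ((hasDerivAt_P hx0 hx1).const_mul (2*a+1))).add (hasDerivAt_W hx0 hx1)
    have heq : -2*Real.sqrt (a*(a+1)) * (Real.sqrt (a*(a+1)) / (2 * (x+a) * Real.sqrt (x*(1-x))))
        + (2*a+1) * (1 / (2 * Real.sqrt (x*(1-x)))) + (1 - 2*x) / (2 * Real.sqrt (x*(1-x)))
        = Real.sqrt (x*(1-x))/(x+a) := by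
      have key : ∀ w sa : ℝ, 0 < w → w^2 = x*(1-x) → sa^2 = a*(a+1) →
          -2*sa * (sa / (2 * (x+a) * w)) + (2*a+1) * (1 / (2*w)) + (1 - 2*x) / (2*w)
            = w/(x+a) := by
        intro w sa hw hw2 hsa2
        field_simp
        linear_combination (-2) * hsa2 + (-2) * hw2
      exact key _ _ (Real.sqrt_pos.2 (by nlinarith)) (Real.sq_sqrt (by nlinarith))
        (Real.sq_sqrt (by positivity))
    exact (H.congr_deriv heq).hasDerivWithinAt
  have hint : IntervalIntegrable (fun t : ℝ => Real.sqrt (t*(1-t))/(t+a)) MeasureTheory.volume 0 1 := by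
    apply ContinuousOn.intervalIntegrable
    rw [uIcc_of_le h01]
    exact cont_WW.continuousOn.div (by fun_prop)
      (fun x hx => by have := hx.1; positivity)
  have hFTC := intervalIntegral.integral_eq_sub_of_hasDeriv_right_of_le h01 hcF hderiv hint
  rw [hFTC, hF]
  simp only
  rw [Q_one ha, Q_zero ha]
  norm_num [Real.arccos_neg_one, Real.arccos_one]
  rw [show a*(a+1) = a^2+a by ring]
  ring

lemma integral_L2 (a : ℝ) (ha : 0 < a) :
    ∫ t in (0:ℝ)..1, Real.sqrt (t*(1-t))/(t+a)^2
      = π * ((2*a+1) / (2*Real.sqrt (a^2+a)) - 1) := by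
  have h01 : (0:ℝ) ≤ 1 := by norm_num
  have hsapos : (0:ℝ) < Real.sqrt (a*(a+1)) := Real.sqrt_pos.2 (by positivity)
  set F : ℝ → ℝ := fun x => (2*a+1)/Real.sqrt (a*(a+1)) * Real.arcsin (Real.sqrt ((a+1)*x)/Real.sqrt (x+a))
      + (-1) * (Real.sqrt (x*(1-x))/(x+a)) + (-2) * (Real.arccos (1-2*x)/2) with hF
  have hcF : ContinuousOn F (Icc 0 1) := by
    apply ContinuousOn.add
    apply ContinuousOn.add
    · exact continuousOn_const.mul (contOn_QQ ha)
    · exact continuousOn_const.mul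
        (cont_WW.continuousOn.div (by fun_prop) (fun x hx => by have := hx.1; positivity))
    · exact continuousOn_const.mul cont_PP.continuousOn
  have hderiv : ∀ x ∈ Ioo (0:ℝ) 1, HasDerivWithinAt F (Real.sqrt (x*(1-x))/(x+a)^2) (Ioi x) x := by
    intro x hx
    obtain ⟨hx0, hx1⟩ := hx
    have hxa : (0:ℝ) < x + a := by linarith
    have hWq : HasDerivAt (fun y : ℝ => Real.sqrt (y*(1-y))/(y+a))
        (((1-2*x)/(2*Real.sqrt (x*(1-x))) * (x+a) - Real.sqrt (x*(1-x)) * 1)/(x+a)^2) x :=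
      (hasDerivAt_W hx0 hx1).div ((hasDerivAt_id x).add_const a) hxa.ne'
    have H := (((hasDerivAt_Q ha hx0 hx1).const_mul ((2*a+1)/Real.sqrt (a*(a+1)))).add
      (hWq.const_mul (-1))).add ((hasDerivAt_P hx0 hx1).const_mul (-2))
    have heq : (2*a+1)/Real.sqrt (a*(a+1)) * (Real.sqrt (a*(a+1)) / (2 * (x+a) * Real.sqrt (x*(1-x))))
        + (-1) * (((1-2*x)/(2*Real.sqrt (x*(1-x))) * (x+a) - Real.sqrt (x*(1-x)) * 1)/(x+a)^2)
        + (-2) * (1 / (2 * Real.sqrt (x*(1-x))))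
        = Real.sqrt (x*(1-x))/(x+a)^2 := by
      have key : ∀ w sa : ℝ, 0 < w → w^2 = x*(1-x) → 0 < sa → sa^2 = a*(a+1) →
          (2*a+1)/sa * (sa / (2 * (x+a) * w)) + (-1) * (((1-2*x)/(2*w) * (x+a) - w * 1)/(x+a)^2)
            + (-2) * (1 / (2*w)) = w/(x+a)^2 := by
        intro w sa hw hw2 hsa hsa2
        field_simp
        linear_combination (2*(x+a)^2 + (-2*a^2 - 4*x*a - 2*x^2)) * hw2
      exact key _ _ (Real.sqrt_pos.2 (by nlinarith)) (Real.sq_sqrt (by nlinarith)) hsapos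
        (Real.sq_sqrt (by positivity))
    exact (H.congr_deriv heq).hasDerivWithinAt
  have hint : IntervalIntegrable (fun t : ℝ => Real.sqrt (t*(1-t))/(t+a)^2) MeasureTheory.volume 0 1 := by
    apply ContinuousOn.intervalIntegrable
    rw [uIcc_of_le h01]
    exact cont_WW.continuousOn.div (by fun_prop) (fun x hx => by have := hx.1; positivity)
  have hFTC := intervalIntegral.integral_eq_sub_of_hasDeriv_right_of_le h01 hcF hderiv hint
  rw [hFTC, hF]
  simp only
  rw [Q_one ha, Q_zero ha]
  norm_num [Real.arccos_neg_one, Real.arccos_one]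
  rw [show a*(a+1) = a^2+a by ring]
  ring

lemma integral_L3 (a : ℝ) (ha : 0 < a) :
    ∫ t in (0:ℝ)..1, Real.sqrt (t*(1-t))/(t+a)^3
      = π / (8 * ((a^2+a) * Real.sqrt (a^2+a))) := by
  have h01 : (0:ℝ) ≤ 1 := by norm_num
  have hsapos : (0:ℝ) < Real.sqrt (a*(a+1)) := Real.sqrt_pos.2 (by positivity)
  set F : ℝ → ℝ := fun x =>
      1/(4*Real.sqrt (a*(a+1))^3) * Real.arcsin (Real.sqrt ((a+1)*x)/Real.sqrt (x+a))
      + 1/(4*(a*(a+1))) * (Real.sqrt (x*(1-x))/(x+a))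
      + (-(1/(2*(a+1)))) * (Real.sqrt (x*(1-x)) * (1-x)/(x+a)^2) with hF
  have hcF : ContinuousOn F (Icc 0 1) := by
    apply ContinuousOn.add
    apply ContinuousOn.add
    · exact continuousOn_const.mul (contOn_QQ ha)
    · exact continuousOn_const.mul
        (cont_WW.continuousOn.div (by fun_prop) (fun x hx => by have := hx.1; positivity))
    · refine continuousOn_const.mul (ContinuousOn.div ?_ (by fun_prop)
        (fun x hx => by have := hx.1; positivity))
      exact cont_WW.continuousOn.mul (by fun_prop)
  have hderiv : ∀ x ∈ Ioo (0:ℝ) 1, HasDerivWithinAt F (Real.sqrt (x*(1-x))/(x+a)^3) (Ioi x) x := by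
    intro x hx
    obtain ⟨hx0, hx1⟩ := hx
    have hxa : (0:ℝ) < x + a := by linarith
    have hWq : HasDerivAt (fun y : ℝ => Real.sqrt (y*(1-y))/(y+a))
        (((1-2*x)/(2*Real.sqrt (x*(1-x))) * (x+a) - Real.sqrt (x*(1-x)) * 1)/(x+a)^2) x :=
      (hasDerivAt_W hx0 hx1).div ((hasDerivAt_id x).add_const a) hxa.ne'
    have hnum : HasDerivAt (fun y : ℝ => Real.sqrt (y*(1-y)) * (1-y))
        ((1-2*x)/(2*Real.sqrt (x*(1-x))) * (1-x) + Real.sqrt (x*(1-x)) * (-1)) x := by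
      have h2 : HasDerivAt (fun y : ℝ => 1-y) (-1 : ℝ) x := by
        exact ((hasDerivAt_const x (1:ℝ)).sub (hasDerivAt_id x)).congr_deriv (by norm_num)
      exact (hasDerivAt_W hx0 hx1).mul h2
    have hden : HasDerivAt (fun y : ℝ => (y+a)^2) (2*(x+a)) x := by
      have := ((hasDerivAt_id x).add_const a).pow 2
      exact this.congr_deriv (by simp)
    have hWq2 : HasDerivAt (fun y : ℝ => Real.sqrt (y*(1-y)) * (1-y)/(y+a)^2)
        ((((1-2*x)/(2*Real.sqrt (x*(1-x))) * (1-x) + Real.sqrt (x*(1-x)) * (-1)) * (x+a)^2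
          - Real.sqrt (x*(1-x)) * (1-x) * (2*(x+a)))/((x+a)^2)^2) x :=
      hnum.div hden (by positivity)
    have H := (((hasDerivAt_Q ha hx0 hx1).const_mul (1/(4*Real.sqrt (a*(a+1))^3))).add
      (hWq.const_mul (1/(4*(a*(a+1)))))).add (hWq2.const_mul (-(1/(2*(a+1)))))
    have heq : 1/(4*Real.sqrt (a*(a+1))^3) * (Real.sqrt (a*(a+1)) / (2 * (x+a) * Real.sqrt (x*(1-x))))
        + 1/(4*(a*(a+1))) * (((1-2*x)/(2*Real.sqrt (x*(1-x))) * (x+a) - Real.sqrt (x*(1-x)) * 1)/(x+a)^2)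
        + (-(1/(2*(a+1)))) * ((((1-2*x)/(2*Real.sqrt (x*(1-x))) * (1-x) + Real.sqrt (x*(1-x)) * (-1)) * (x+a)^2
          - Real.sqrt (x*(1-x)) * (1-x) * (2*(x+a)))/((x+a)^2)^2)
        = Real.sqrt (x*(1-x))/(x+a)^3 := by
      have hcube : (4*Real.sqrt (a*(a+1))^3) = 4*(a*(a+1))*Real.sqrt (a*(a+1)) := by
        rw [pow_succ, Real.sq_sqrt (by positivity : (0:ℝ) ≤ a*(a+1))]; ring
      rw [hcube]
      have key : ∀ w sa : ℝ, 0 < w → w^2 = x*(1-x) → 0 < sa → sa^2 = a*(a+1) →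
          1/(4*(a*(a+1))*sa) * (sa / (2 * (x+a) * w))
          + 1/(4*(a*(a+1))) * (((1-2*x)/(2*w) * (x+a) - w * 1)/(x+a)^2)
          + (-(1/(2*(a+1)))) * ((((1-2*x)/(2*w) * (1-x) + w * (-1)) * (x+a)^2
            - w * (1-x) * (2*(x+a)))/((x+a)^2)^2)
          = w/(x+a)^3 := by
        intro w sa hw hw2 hsa hsa2
        have h1 : 1/(4*(a*(a+1))*sa) * (sa/(2*(x+a)*w)) = 1/(8*(a*(a+1))*(x+a)*w) := by
          field_simp; ring
        rw [h1]
        field_simp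
        linear_combination (-32*x - 32*a - 64*a*x - 64*a^2) * hw2
      exact key _ _ (Real.sqrt_pos.2 (by nlinarith)) (Real.sq_sqrt (by nlinarith)) hsapos
        (Real.sq_sqrt (by positivity))
    exact (H.congr_deriv heq).hasDerivWithinAt
  have hint : IntervalIntegrable (fun t : ℝ => Real.sqrt (t*(1-t))/(t+a)^3) MeasureTheory.volume 0 1 := by
    apply ContinuousOn.intervalIntegrable
    rw [uIcc_of_le h01]
    exact cont_WW.continuousOn.div (by fun_prop) (fun x hx => by have := hx.1; positivity)
  have hFTC := intervalIntegral.integral_eq_sub_of_hasDeriv_right_of_le h01 hcF hderiv hint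
  rw [hFTC, hF]
  simp only
  have hkey : Real.sqrt (a*(a+1))^3 = (a^2+a) * Real.sqrt (a^2+a) := by
    rw [show a*(a+1) = a^2+a by ring, pow_succ, Real.sq_sqrt (by positivity : (0:ℝ) ≤ a^2+a)]
  rw [Q_one ha, Q_zero ha, hkey]
  have hspos : (0:ℝ) < Real.sqrt (a^2+a) := Real.sqrt_pos.2 (by positivity)
  have haa : (0:ℝ) < a^2+a := by positivity
  norm_num
  field_simp
  norm_num

lemma intW_sq {a : ℝ} (ha : 0 < a) :
    IntervalIntegrable (fun t : ℝ => Real.sqrt (t*(1-t))/(t+a)^2) MeasureTheory.volume 0 1 := by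
  apply ContinuousOn.intervalIntegrable
  rw [uIcc_of_le (by norm_num : (0:ℝ) ≤ 1)]
  exact cont_WW.continuousOn.div (by fun_prop) (fun x hx => by have := hx.1; positivity)

lemma intW_lin {a : ℝ} (ha : 0 < a) :
    IntervalIntegrable (fun t : ℝ => Real.sqrt (t*(1-t))/(t+a)) MeasureTheory.volume 0 1 := by
  apply ContinuousOn.intervalIntegrable
  rw [uIcc_of_le (by norm_num : (0:ℝ) ≤ 1)]
  exact cont_WW.continuousOn.div (by fun_prop) (fun x hx => by have := hx.1; positivity)

/-- `∫_0^1 √(t(1-t)) / ((t+b)²(t+c)) dt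
  = π / (2√(b²+b)((b+c+2bc) + 2√((b+1)(c+1)bc)))` for `b, c > 0`. -/
theorem integral_sqrt_mul_one_sub_div_sq_linear (b c : ℝ) (hb : 0 < b) (hc : 0 < c) :
    ∫ t in (0 : ℝ)..1, Real.sqrt (t * (1 - t)) / ((t + b) ^ 2 * (t + c))
      = π / (2 * Real.sqrt (b ^ 2 + b) *
          ((b + c + 2 * b * c) + 2 * Real.sqrt ((b + 1) * (c + 1) * b * c))) := by
  have hsbpos : (0:ℝ) < Real.sqrt (b^2+b) := Real.sqrt_pos.2 (by positivity)
  rcases eq_or_ne c b with hcb | hcb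
  · subst hcb
    have hfun : (fun t : ℝ => Real.sqrt (t * (1 - t)) / ((t + c) ^ 2 * (t + c)))
        = fun t : ℝ => Real.sqrt (t * (1 - t)) / (t + c)^3 := by
      funext t
      rw [show (t+c)^2*(t+c) = (t+c)^3 from by ring]
    rw [show (∫ t in (0:ℝ)..1, Real.sqrt (t * (1 - t)) / ((t + c) ^ 2 * (t + c)))
        = ∫ t in (0:ℝ)..1, Real.sqrt (t * (1 - t)) / (t + c)^3 by rw [hfun]]
    rw [integral_L3 c hc]
    have h1 : Real.sqrt ((c+1)*(c+1)*c*c) = c*(c+1) := by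
      rw [show (c+1)*(c+1)*c*c = (c*(c+1))^2 by ring, Real.sqrt_sq (by positivity)]
    rw [h1]
    congr 1
    have hs2 : Real.sqrt (c^2+c)^2 = c^2+c := Real.sq_sqrt (by positivity)
    nlinarith [hs2]
  · have hbc : b - c ≠ 0 := sub_ne_zero.2 (Ne.symm hcb)
    have hcbne : c - b ≠ 0 := sub_ne_zero.2 hcb
    have hEq : EqOn (fun t : ℝ => Real.sqrt (t * (1 - t)) / ((t + b) ^ 2 * (t + c)))
        (fun t : ℝ => (1/(c-b)) * (Real.sqrt (t*(1-t))/(t+b)^2)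
          + ((-(1/(b-c)^2)) * (Real.sqrt (t*(1-t))/(t+b))
          + (1/(b-c)^2) * (Real.sqrt (t*(1-t))/(t+c)))) (uIcc (0:ℝ) 1) := by
      intro t ht
      rw [uIcc_of_le (by norm_num : (0:ℝ) ≤ 1)] at ht
      have h1 : t + b ≠ 0 := by have := ht.1; positivity
      have h2 : t + c ≠ 0 := by have := ht.1; positivity
      simp only
      field_simp
      ring
    rw [intervalIntegral.integral_congr hEq]
    rw [intervalIntegral.integral_add ((intW_sq hb).const_mul _)
      (((intW_lin hb).const_mul _).add ((intW_lin hc).const_mul _)),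
      intervalIntegral.integral_add ((intW_lin hb).const_mul _) ((intW_lin hc).const_mul _),
      intervalIntegral.integral_const_mul, intervalIntegral.integral_const_mul,
      intervalIntegral.integral_const_mul, integral_L2 b hb, integral_L1 b hb, integral_L1 c hc]
    have hscpos : (0:ℝ) < Real.sqrt (c^2+c) := Real.sqrt_pos.2 (by positivity)
    have hprod : Real.sqrt ((b+1)*(c+1)*b*c) = Real.sqrt (b^2+b) * Real.sqrt (c^2+c) := by
      rw [← Real.sqrt_mul (by positivity)]
      congr 1; ring
    rw [hprod]
    set sb := Real.sqrt (b^2+b) with hsb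
    set sc := Real.sqrt (c^2+c) with hsc
    have hsb2 : sb^2 = b^2+b := Real.sq_sqrt (by positivity)
    have hsc2 : sc^2 = c^2+c := Real.sq_sqrt (by positivity)
    have hD : (0:ℝ) < (b + c + 2*b*c) + 2*(sb*sc) := by
      have := mul_pos hsbpos hscpos
      nlinarith
    have hDne : ((b + c + 2*b*c) + 2*(sb*sc)) ≠ 0 := hD.ne'
    field_simp
    linear_combination (2*(c-b)*(b+c+2*b*c+2*(sb*sc)) - 4*(c-b)*sc^2) * hsb2 - 4*(c-b)*b*(b+1) * hsc2
end

section
/- Lower spectral bound for the regularized Gram matrix: suppose Z_< ∈ R^{m×N₁} satisfies ‖Z_<ᵀZ_< − I_{N₁}‖_op ≤ 1/4, Z_r ∈ R^{m×N₂} satisfies ‖Z_r‖_op ≤ C, and Λ^{-1} is a diagonal positive semidefinite (N₁+N₂)×(N₁+N₂) matrix whose last N₂ diagonal entries are all ≥ c > 0. Then with Z = [Z_<, Z_r], the matrix D = Λ^{-1} + ZᵀZ satisfies D ⪰ λ₁ I for some λ₁ > 0 depending only on c and C. -/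
open Matrix
open scoped Matrix.Norms.L2Operator

section Aux

private lemma dot_self_nonneg' {n : Type*} [Fintype n] (x : n → ℝ) : 0 ≤ x ⬝ᵥ x :=
  Finset.sum_nonneg fun i _ => mul_self_nonneg _

private lemma dot_eq_norm_sq {n : Type*} [Fintype n] [DecidableEq n] (x : n → ℝ) :
    x ⬝ᵥ x = ‖(WithLp.equiv 2 (n → ℝ)).symm x‖ ^ 2 := by
  rw [← real_inner_self_eq_norm_sq]
  simp [PiLp.inner_apply, dotProduct, PiLp.toLp_apply, -inner_self_eq_norm_sq_to_K]

private lemma mulVec_dot_le {m n : Type*} [Fintype m] [Fintype n] [DecidableEq m] [DecidableEq n]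
    (A : Matrix m n ℝ) (x : n → ℝ) :
    (A *ᵥ x) ⬝ᵥ (A *ᵥ x) ≤ ‖A‖ ^ 2 * (x ⬝ᵥ x) := by
  have h := A.l2_opNorm_mulVec ((WithLp.equiv 2 (n → ℝ)).symm x)
  rw [dot_eq_norm_sq, dot_eq_norm_sq]
  have hx : (0:ℝ) ≤ ‖(WithLp.equiv 2 (n → ℝ)).symm x‖ := norm_nonneg _
  have hA : (0:ℝ) ≤ ‖A‖ := norm_nonneg _
  have h2 : ‖(EuclideanSpace.equiv m ℝ).symm (A *ᵥ ((WithLp.equiv 2 (n → ℝ)).symm x))‖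
      = ‖(WithLp.equiv 2 (m → ℝ)).symm (A *ᵥ x)‖ := rfl
  rw [h2] at h
  nlinarith [norm_nonneg ((WithLp.equiv 2 (m → ℝ)).symm (A *ᵥ x))]

private lemma dot_mulVec_abs_le {n : Type*} [Fintype n] [DecidableEq n] (M : Matrix n n ℝ) (x : n → ℝ) :
    |x ⬝ᵥ (M *ᵥ x)| ≤ ‖M‖ * (x ⬝ᵥ x) := by
  have key : x ⬝ᵥ (M *ᵥ x)
      = inner ℝ ((WithLp.equiv 2 (n → ℝ)).symm x) ((WithLp.equiv 2 (n → ℝ)).symm (M *ᵥ x)) := by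
    simp [PiLp.inner_apply, dotProduct, PiLp.toLp_apply, mul_comm]
  have h1 := abs_real_inner_le_norm ((WithLp.equiv 2 (n → ℝ)).symm x)
    ((WithLp.equiv 2 (n → ℝ)).symm (M *ᵥ x))
  have h2 := M.l2_opNorm_mulVec ((WithLp.equiv 2 (n → ℝ)).symm x)
  have h2' : ‖(WithLp.equiv 2 (n → ℝ)).symm (M *ᵥ x)‖ ≤ ‖M‖ * ‖(WithLp.equiv 2 (n → ℝ)).symm x‖ := h2
  rw [key, dot_eq_norm_sq]
  calc |inner ℝ ((WithLp.equiv 2 (n → ℝ)).symm x) ((WithLp.equiv 2 (n → ℝ)).symm (M *ᵥ x))|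
      ≤ ‖(WithLp.equiv 2 (n → ℝ)).symm x‖ * ‖(WithLp.equiv 2 (n → ℝ)).symm (M *ᵥ x)‖ := h1
    _ ≤ ‖(WithLp.equiv 2 (n → ℝ)).symm x‖ * (‖M‖ * ‖(WithLp.equiv 2 (n → ℝ)).symm x‖) := by
        exact mul_le_mul_of_nonneg_left h2' (norm_nonneg _)
    _ = ‖M‖ * ‖(WithLp.equiv 2 (n → ℝ)).symm x‖ ^ 2 := by ring

private lemma scalar_key (c C A B AB U V L lam : ℝ) (hc : 0 < c) (hC : 0 < C)
    (hU : 0 ≤ U) (hV : 0 ≤ V)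
    (hL : c * V ≤ L) (hA : 3 / 4 * U ≤ A) (hB : B ≤ C ^ 2 * V)
    (h4 : 0 ≤ 4 * C ^ 4 * A + 4 * C ^ 2 * (2 * C ^ 2 + c) * AB + (2 * C ^ 2 + c) ^ 2 * B)
    (hlam : lam = min (c / 2) (3 * c / (4 * (2 * C ^ 2 + c)))) :
    lam * (U + V) ≤ L + (A + 2 * AB + B) := by
  have hspos : (0:ℝ) < 2 * C ^ 2 + c := by positivity
  have h5 : lam ≤ c / 2 := hlam ▸ min_le_left _ _
  have h6 : lam ≤ 3 * c / (4 * (2 * C ^ 2 + c)) := hlam ▸ min_le_right _ _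
  have h6' : 4 * (2 * C ^ 2 + c) * lam ≤ 3 * c := by
    have := (le_div_iff₀ (by positivity : (0:ℝ) < 4 * (2 * C ^ 2 + c))).mp h6
    nlinarith
  have P1 : 0 ≤ 4 * C ^ 2 * (2 * C ^ 2 + c) * (L - c * V) :=
    mul_nonneg (by positivity) (by linarith)
  have P2 : 0 ≤ 4 * C ^ 2 * c * (A - 3 / 4 * U) :=
    mul_nonneg (by positivity) (by linarith)
  have P3 : 0 ≤ 2 * (2 * C ^ 2 + c) * c * (C ^ 2 * V - B) :=
    mul_nonneg (by positivity) (by linarith)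
  have P5 : 0 ≤ 2 * C ^ 2 * (2 * C ^ 2 + c) * (c - 2 * lam) * V :=
    mul_nonneg (mul_nonneg (by positivity) (by linarith)) hV
  have P6 : 0 ≤ C ^ 2 * (3 * c - 4 * (2 * C ^ 2 + c) * lam) * U :=
    mul_nonneg (mul_nonneg (by positivity) (by linarith)) hU
  have key : 4 * C ^ 2 * (2 * C ^ 2 + c) * (L + (A + 2 * AB + B) - lam * (U + V))
      = 4 * C ^ 2 * (2 * C ^ 2 + c) * (L - c * V)
        + 4 * C ^ 2 * c * (A - 3 / 4 * U)
        + 2 * (2 * C ^ 2 + c) * c * (C ^ 2 * V - B)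
        + 2 * (4 * C ^ 4 * A + 4 * C ^ 2 * (2 * C ^ 2 + c) * AB + (2 * C ^ 2 + c) ^ 2 * B)
        + 2 * C ^ 2 * (2 * C ^ 2 + c) * (c - 2 * lam) * V
        + C ^ 2 * (3 * c - 4 * (2 * C ^ 2 + c) * lam) * U := by ring
  have hprod : 0 ≤ 4 * C ^ 2 * (2 * C ^ 2 + c) * (L + (A + 2 * AB + B) - lam * (U + V)) := by
    rw [key]; linarith
  have := (mul_nonneg_iff_of_pos_left (by positivity : (0:ℝ) < 4 * C ^ 2 * (2 * C ^ 2 + c))).mp hprod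
  linarith

end Aux

/-- Lower spectral bound for the regularized Gram matrix: if `‖Z_<ᵀZ_< − I‖ ≤ 1/4`,
`‖Z_r‖ ≤ C`, and `Λ⁻¹` is diagonal PSD with its last `N₂` diagonal entries ≥ `c > 0`,
then `D = Λ⁻¹ + ZᵀZ ⪰ λ₁ I` for some `λ₁ > 0` depending only on `c` and `C`. -/
theorem regularized_gram_lower_bound (c C : ℝ) (hc : 0 < c) (hC : 0 < C) :
    ∃ lam : ℝ, 0 < lam ∧
      ∀ (m N₁ N₂ : ℕ) (Zlow : Matrix (Fin m) (Fin N₁) ℝ) (Zr : Matrix (Fin m) (Fin N₂) ℝ)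
        (Λinv : Matrix (Fin N₁ ⊕ Fin N₂) (Fin N₁ ⊕ Fin N₂) ℝ),
        ‖Zlowᵀ * Zlow - 1‖ ≤ 1 / 4 → ‖Zr‖ ≤ C →
        Λinv.IsDiag → Λinv.PosSemidef → (∀ j : Fin N₂, c ≤ Λinv (Sum.inr j) (Sum.inr j)) →
        (Λinv + (Matrix.fromCols Zlow Zr)ᵀ * Matrix.fromCols Zlow Zr
          - lam • (1 : Matrix (Fin N₁ ⊕ Fin N₂) (Fin N₁ ⊕ Fin N₂) ℝ)).PosSemidef := by
  refine ⟨min (c / 2) (3 * c / (4 * (2 * C ^ 2 + c))), ?_, ?_⟩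
  · have : 0 < 2 * C ^ 2 + c := by positivity
    apply lt_min (by positivity) (by positivity)
  intro m N₁ N₂ Zlow Zr Λinv hZlow hZr hdiag hPSD hcbound
  set lam : ℝ := min (c / 2) (3 * c / (4 * (2 * C ^ 2 + c))) with hlam
  set Z := Matrix.fromCols Zlow Zr with hZ
  refine posSemidef_iff_dotProduct_mulVec.mpr ⟨?_, ?_⟩
  · -- Hermitian
    have h1 : Λinv.IsHermitian := hPSD.1
    have h2 : (Zᵀ * Z).IsHermitian := by
      have := isHermitian_conjTranspose_mul_self Z
      simpa using this
    have h3 : (lam • (1 : Matrix (Fin N₁ ⊕ Fin N₂) (Fin N₁ ⊕ Fin N₂) ℝ)).IsHermitian := by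
      simp [Matrix.IsHermitian]
    exact (h1.add h2).sub h3
  intro x
  rw [show star x = x from funext fun i => star_trivial _]
  -- decompose x
  set u : Fin N₁ → ℝ := x ∘ Sum.inl with hu
  set v : Fin N₂ → ℝ := x ∘ Sum.inr with hv
  have hxelim : Sum.elim u v = x := Sum.elim_comp_inl_inr x
  set a : Fin m → ℝ := Zlow *ᵥ u with ha
  set b : Fin m → ℝ := Zr *ᵥ v with hb
  -- expand quadratic form
  have hq : x ⬝ᵥ ((Zᵀ * Z) *ᵥ x) = (Z *ᵥ x) ⬝ᵥ (Z *ᵥ x) := by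
    rw [← mulVec_mulVec, dotProduct_mulVec, vecMul_transpose]
  have hexp : x ⬝ᵥ ((Λinv + Zᵀ * Z - lam • 1) *ᵥ x)
      = x ⬝ᵥ (Λinv *ᵥ x) + (Z *ᵥ x) ⬝ᵥ (Z *ᵥ x) - lam * (x ⬝ᵥ x) := by
    rw [sub_mulVec, add_mulVec, dotProduct_sub, dotProduct_add,
      smul_mulVec, one_mulVec, dotProduct_smul, hq]
    simp [smul_eq_mul]
  have hZx : Z *ᵥ x = a + b := by
    rw [← hxelim, hZ, fromCols_mulVec_sumElim]
  -- Λ part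
  have hdot_sum : x ⬝ᵥ x = u ⬝ᵥ u + v ⬝ᵥ v := by
    simp [dotProduct, Fintype.sum_sum_type, hu, hv]
  have hdiag_nonneg : ∀ i, 0 ≤ Λinv i i := by
    intro i
    have := hPSD.dotProduct_mulVec_nonneg (Pi.single i 1)
    simpa [dotProduct, mulVec, Pi.single_apply] using this
  have hLam : c * (v ⬝ᵥ v) ≤ x ⬝ᵥ (Λinv *ᵥ x) := by
    have hmv : ∀ i, (Λinv *ᵥ x) i = Λinv i i * x i := by
      intro i
      rw [mulVec, dotProduct]
      rw [Finset.sum_eq_single i]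
      · intro j _ hj
        rw [hdiag (Ne.symm hj), zero_mul]
      · intro h; exact absurd (Finset.mem_univ i) h
    have : x ⬝ᵥ (Λinv *ᵥ x) = ∑ i, Λinv i i * x i ^ 2 := by
      simp only [dotProduct, hmv]; congr 1; ext i; ring
    rw [this, Fintype.sum_sum_type]
    have h1 : 0 ≤ ∑ i : Fin N₁, Λinv (Sum.inl i) (Sum.inl i) * x (Sum.inl i) ^ 2 :=
      Finset.sum_nonneg fun i _ => mul_nonneg (hdiag_nonneg _) (sq_nonneg _)
    have h2 : c * (v ⬝ᵥ v) ≤ ∑ j : Fin N₂, Λinv (Sum.inr j) (Sum.inr j) * x (Sum.inr j) ^ 2 := by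
      rw [dotProduct, Finset.mul_sum]
      refine Finset.sum_le_sum fun j _ => ?_
      have : v j * v j = x (Sum.inr j) ^ 2 := by rw [hv]; simp [sq]
      rw [this]
      exact mul_le_mul_of_nonneg_right (hcbound j) (sq_nonneg _)
    linarith
  -- Zlow part
  have hau : 3 / 4 * (u ⬝ᵥ u) ≤ a ⬝ᵥ a := by
    have key : u ⬝ᵥ ((Zlowᵀ * Zlow) *ᵥ u) = a ⬝ᵥ a := by
      rw [← mulVec_mulVec, dotProduct_mulVec, vecMul_transpose, ha]
    have hCS := dot_mulVec_abs_le (Zlowᵀ * Zlow - 1) u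
    have hsplit : u ⬝ᵥ ((Zlowᵀ * Zlow - 1) *ᵥ u) = u ⬝ᵥ ((Zlowᵀ * Zlow) *ᵥ u) - u ⬝ᵥ u := by
      rw [sub_mulVec, dotProduct_sub, one_mulVec]
    have habs := abs_le.1 hCS
    have hnorm : ‖Zlowᵀ * Zlow - 1‖ * (u ⬝ᵥ u) ≤ 1 / 4 * (u ⬝ᵥ u) :=
      mul_le_mul_of_nonneg_right hZlow (dot_self_nonneg' u)
    rw [key] at hsplit
    nlinarith [habs.1, dot_self_nonneg' u]
  -- Zr part
  have hbv : b ⬝ᵥ b ≤ C ^ 2 * (v ⬝ᵥ v) := by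
    have h := mulVec_dot_le Zr v
    have hsq : ‖Zr‖ ^ 2 ≤ C ^ 2 := by nlinarith [norm_nonneg Zr]
    have := mul_le_mul_of_nonneg_right hsq (dot_self_nonneg' v)
    rw [← hb] at h
    linarith
  -- cross term certificate
  have h4 : 0 ≤ 4 * C ^ 4 * (a ⬝ᵥ a) + 4 * C ^ 2 * (2 * C ^ 2 + c) * (a ⬝ᵥ b)
      + (2 * C ^ 2 + c) ^ 2 * (b ⬝ᵥ b) := by
    have h0 := dot_self_nonneg' ((2 * C ^ 2) • a + (2 * C ^ 2 + c) • b)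
    have : ((2 * C ^ 2) • a + (2 * C ^ 2 + c) • b) ⬝ᵥ ((2 * C ^ 2) • a + (2 * C ^ 2 + c) • b)
        = 4 * C ^ 4 * (a ⬝ᵥ a) + 4 * C ^ 2 * (2 * C ^ 2 + c) * (a ⬝ᵥ b)
          + (2 * C ^ 2 + c) ^ 2 * (b ⬝ᵥ b) := by
      simp only [add_dotProduct, dotProduct_add, smul_dotProduct, dotProduct_smul,
        smul_eq_mul, dotProduct_comm b a]
      ring
    linarith [this ▸ h0]
  have hZxdot : (Z *ᵥ x) ⬝ᵥ (Z *ᵥ x) = a ⬝ᵥ a + 2 * (a ⬝ᵥ b) + b ⬝ᵥ b := by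
    rw [hZx, add_dotProduct, dotProduct_add, dotProduct_add, dotProduct_comm b a]; ring
  rw [hexp, hZxdot, hdot_sum]
  have := scalar_key c C (a ⬝ᵥ a) (b ⬝ᵥ b) (a ⬝ᵥ b) (u ⬝ᵥ u) (v ⬝ᵥ v)
    (x ⬝ᵥ (Λinv *ᵥ x)) lam hc hC (dot_self_nonneg' u) (dot_self_nonneg' v)
    hLam hau hbv h4 hlam
  linarith
end
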